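/- Suppose for each t ∈ ℝ and each pair s ≤ t, μ_{−∞,t} and μ_{s,t} are probability measures on H satisfying μ_{−∞,t} = (pushforward of μ_{−∞,s} under U_{s,t}) ∗ μ_{s,t} for all s ≤ t, and define π_{s,t}(x,·) as the pushforward of μ_{s,t} under y ↦ y + U_{s,t}x. Let κ : ℝ → H satisfy U_{s,t} κ_s = κ_t for all s ≤ t. Define ν^κ_t as the pushforward of μ_{−∞,t} under y ↦ y + κ_t. Then (ν^κ_t)_{t∈ℝ} is a π-entrance law, and for all t ∈ ℝ and a ∈ H: charFun ν^κ_t (a) = exp(i⟨a,κ_t⟩) · charFun μ_{−∞,t}(a). -/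

import Mathlib

open MeasureTheory Complex
open scoped RealInnerProductSpace

noncomputable def charFun' {H : Type*} [NormedAddCommGroup H] [InnerProductSpace ℝ H]
    [MeasurableSpace H] (μ : Measure H) (a : H) : ℂ :=
  ∫ x, Complex.exp ((⟪a, x⟫ : ℂ) * Complex.I) ∂μ

/-- `ν` is an entrance law for the transition kernels
`π_{s,t}(x, ·) = (μ s t).map (fun y => y + U s t x)`. -/
def IsEntranceLaw {H : Type*} [NormedAddCommGroup H] [InnerProductSpace ℝ H]
    [MeasurableSpace H] (U : ℝ → ℝ → H →L[ℝ] H) (μ : ℝ → ℝ → Measure H)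
    (ν : ℝ → Measure H) : Prop :=
  (∀ t : ℝ, IsProbabilityMeasure (ν t)) ∧
    ∀ s t : ℝ, s ≤ t → ∀ B : Set H, MeasurableSet B →
      ν t B = ∫⁻ x, ((μ s t).map (fun y => y + U s t x)) B ∂(ν s)

theorem stmt7
    {H : Type*} [NormedAddCommGroup H] [InnerProductSpace ℝ H] [CompleteSpace H]
    [TopologicalSpace.SeparableSpace H] [MeasurableSpace H] [BorelSpace H]
    (U : ℝ → ℝ → H →L[ℝ] H)
    (hU_id : ∀ t : ℝ, U t t = ContinuousLinearMap.id ℝ H)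
    (hU_comp : ∀ s r t : ℝ, s ≤ r → r ≤ t → (U r t).comp (U s r) = U s t)
    (μinf : ℝ → Measure H) (μ : ℝ → ℝ → Measure H)
    (hμinf_prob : ∀ t : ℝ, IsProbabilityMeasure (μinf t))
    (hμprob : ∀ s t : ℝ, s ≤ t → IsProbabilityMeasure (μ s t))
    (hconv : ∀ s t : ℝ, s ≤ t →
      μinf t = Measure.conv ((μinf s).map (U s t)) (μ s t))
    (κ : ℝ → H) (hκ : ∀ s t : ℝ, s ≤ t → U s t (κ s) = κ t) :
    IsEntranceLaw U μ (fun t => (μinf t).map (fun y => y + κ t)) ∧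
      ∀ (t : ℝ) (a : H),
        charFun' ((μinf t).map (fun y => y + κ t)) a
          = Complex.exp ((⟪a, κ t⟫ : ℂ) * Complex.I) * charFun' (μinf t) a := by
  have hmeas_add : ∀ c : H, Measurable fun y : H => y + c := fun c =>
    measurable_id.add_const c
  constructor
  · constructor
    · intro t
      have := hμinf_prob t
      exact Measure.isProbabilityMeasure_map (hmeas_add (κ t)).aemeasurable
    · intro s t hst B hB
      have hα : IsProbabilityMeasure (μinf s) := hμinf_prob s
      have hβ : IsProbabilityMeasure (μ s t) := hμprob s t hst
      -- LHS
      have hUst : Measurable (U s t) := (U s t).continuous.measurable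
      have hLHS : ((μinf t).map (fun y => y + κ t)) B
          = ∫⁻ z, μ s t {y | y + z + κ t ∈ B} ∂((μinf s).map (U s t)) := by
        rw [Measure.map_apply (hmeas_add (κ t)) hB, hconv s t hst]
        unfold Measure.conv
        have hC : MeasurableSet ((fun p : H × H => p.1 + p.2) ⁻¹'
            ((fun y => y + κ t) ⁻¹' B)) :=
          measurable_add (hB.preimage (hmeas_add (κ t)))
        rw [Measure.map_apply measurable_add (hB.preimage (hmeas_add (κ t))),
          Measure.prod_apply hC]
        refine lintegral_congr fun z => ?_
        congr 1
        ext y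
        simp [add_comm z y, add_assoc]
      rw [hLHS]
      -- RHS
      have hGmeas : Measurable fun w : H => μ s t {y | y + w ∈ B} := by
        have hS' : MeasurableSet {p : H × H | p.2 + p.1 ∈ B} :=
          (measurable_snd.add measurable_fst) hB
        simpa using measurable_measure_prodMk_left (ν := μ s t) hS'
      have hFeq : ∀ x : H,
          (Measure.map (fun y => y + U s t x) (μ s t)) B = μ s t {y | y + U s t x ∈ B} :=
        fun x => Measure.map_apply (hmeas_add _) hB
      have hRHS : (∫⁻ x, ((μ s t).map (fun y => y + U s t x)) B
            ∂((μinf s).map (fun y => y + κ s)))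
          = ∫⁻ z, μ s t {y | y + z + κ t ∈ B} ∂((μinf s).map (U s t)) := by
        calc (∫⁻ x, ((μ s t).map (fun y => y + U s t x)) B
              ∂((μinf s).map (fun y => y + κ s)))
            = ∫⁻ x, μ s t {y | y + U s t x ∈ B} ∂((μinf s).map (fun y => y + κ s)) :=
              lintegral_congr fun x => hFeq x
          _ = ∫⁻ x, μ s t {y | y + U s t (x + κ s) ∈ B} ∂(μinf s) :=
              lintegral_map (hGmeas.comp hUst) (hmeas_add (κ s))
          _ = ∫⁻ x, μ s t {y | y + U s t x + κ t ∈ B} ∂(μinf s) := by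
              simp only [map_add, hκ s t hst, ← add_assoc]
          _ = ∫⁻ z, μ s t {y | y + z + κ t ∈ B} ∂((μinf s).map (U s t)) := by
              have hm : Measurable fun w : H => μ s t {y | y + w + κ t ∈ B} := by
                have h := hGmeas.comp (measurable_id.add_const (κ t))
                simpa [Function.comp_def, ← add_assoc] using h
              exact (lintegral_map (f := fun w : H => μ s t {y | y + w + κ t ∈ B})
                hm hUst).symm
      exact hRHS.symm
  · intro t a
    have : IsProbabilityMeasure (μinf t) := hμinf_prob t
    unfold charFun'
    rw [integral_map (hmeas_add (κ t)).aemeasurable]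
    · rw [← integral_const_mul]
      congr 1
      ext x
      rw [← Complex.exp_add]
      congr 1
      push_cast [inner_add_right]
      ring
    · apply Measurable.aestronglyMeasurable
      apply Measurable.cexp
      exact (Complex.measurable_ofReal.comp
        (measurable_const.inner measurable_id)).mul_const _
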